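/- For every integer n ≥ 0, the denominator of the sum-of-powers polynomial S_n(x) = (B_{n+1}(x) − B_{n+1})/(n+1) satisfies denom(S_n(x)) = (n+1) · D_{n+1}. -/

import Mathlib

/-- A rational polynomial has only integral coefficients. -/
def IsIntPoly (f : Polynomial ℚ) : Prop := ∀ i, (f.coeff i).den = 1

/-- The least positive integer `d` such that `d • f` has only integral coefficients. -/
noncomputable def polyDenom (f : Polynomial ℚ) : ℕ :=
  sInf {d : ℕ | 0 < d ∧ IsIntPoly ((d : ℚ) • f)}

/-- Sum of base-`p` digits of `n`. -/
def sd (p n : ℕ) : ℕ := (Nat.digits p n).sum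

/-- Radical (squarefree kernel) of `n`. -/
def rad (n : ℕ) : ℕ := ∏ p ∈ n.primeFactors, p

/-- `D n = denom (B_n(x) - B_n)`. -/
noncomputable def D (n : ℕ) : ℕ :=
  polyDenom (Polynomial.bernoulli n - Polynomial.C (bernoulli n))

/-- `DB n = denom (B_n(x))`. -/
noncomputable def DB (n : ℕ) : ℕ := polyDenom (Polynomial.bernoulli n)

/-- `D̂ n`: product of primes `p` with `p ∤ n` and `s_p(n) ≥ p`.
(Any such prime satisfies `p ≤ s_p(n) ≤ n`.) -/
def Dhat (n : ℕ) : ℕ :=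
  ∏ p ∈ (Finset.range (n + 1)).filter (fun p => p.Prime ∧ ¬ p ∣ n ∧ p ≤ sd p n), p

/-- `D̃ n`: product of primes `p` with `p ∣ n` and `s_p(n) ≥ p`. -/
def Dtilde (n : ℕ) : ℕ :=
  ∏ p ∈ (Finset.range (n + 1)).filter (fun p => p.Prime ∧ p ∣ n ∧ p ≤ sd p n), p

/-- `Ď n`: product of primes `p` with `p ∣ n` and `s_p(n) < p`. -/
def Dcheck (n : ℕ) : ℕ :=
  ∏ p ∈ (Finset.range (n + 1)).filter (fun p => p.Prime ∧ p ∣ n ∧ sd p n < p), p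

/-- `D⁺ n`: product of primes `p` with `p > √n` and `s_p(n) ≥ p`. -/
def Dplus (n : ℕ) : ℕ :=
  ∏ p ∈ (Finset.range (n + 1)).filter (fun p => p.Prime ∧ n < p ^ 2 ∧ p ≤ sd p n), p

/-- The sum-of-powers polynomial `S_n(x) = (B_{n+1}(x) - B_{n+1}) / (n+1)`. -/
noncomputable def Spoly (n : ℕ) : Polynomial ℚ :=
  Polynomial.C (((n : ℚ) + 1)⁻¹) *
    (Polynomial.bernoulli (n + 1) - Polynomial.C (bernoulli (n + 1)))

lemma den_mul_eq_one_iff (q : ℚ) (d : ℕ) (hd : 0 < d) : ((d:ℚ) * q).den = 1 ↔ q.den ∣ d := by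
  constructor
  · intro h
    have hd' : (d:ℚ) ≠ 0 := by positivity
    have h1 : ((d:ℚ) * q) = ((((d:ℚ)*q).num : ℤ) : ℚ) := ((Rat.den_eq_one_iff ((d:ℚ)*q)).mp h).symm
    have h2 : q = Rat.divInt ((d:ℚ)*q).num (d:ℤ) := by
      rw [Rat.divInt_eq_div, ← h1]
      push_cast
      field_simp
    have h3 := Rat.den_dvd ((d:ℚ)*q).num (d:ℤ)
    rw [← h2] at h3
    exact_mod_cast h3
  · rintro ⟨k, hk⟩
    have h0 : (q.den:ℚ) ≠ 0 := by exact_mod_cast q.den_ne_zero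
    have hq : (q.den:ℚ) * q = (q.num:ℚ) := by
      rw [mul_comm, ← eq_div_iff h0, Rat.num_div_den]
    have : (d:ℚ) * q = ((q.num * k : ℤ) : ℚ) := by
      push_cast [hk]
      rw [mul_comm (q.den:ℚ) (k:ℚ), mul_assoc, hq]
      ring
    rw [this, Rat.den_intCast]

lemma isIntPoly_iff (f : Polynomial ℚ) (d : ℕ) (hd : 0 < d) :
    IsIntPoly ((d : ℚ) • f) ↔ ∀ i, (f.coeff i).den ∣ d := by
  unfold IsIntPoly
  simp only [Polynomial.coeff_smul, smul_eq_mul]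
  exact forall_congr' fun i => den_mul_eq_one_iff (f.coeff i) d hd

lemma polyDenom_set_nonempty (f : Polynomial ℚ) :
    {d : ℕ | 0 < d ∧ IsIntPoly ((d : ℚ) • f)}.Nonempty := by
  refine ⟨∏ i ∈ f.support, (f.coeff i).den, ?_, ?_⟩
  · exact Finset.prod_pos fun i _ => (f.coeff i).pos
  · rw [isIntPoly_iff _ _ (Finset.prod_pos fun i _ => (f.coeff i).pos)]
    intro i
    by_cases hi : i ∈ f.support
    · exact Finset.dvd_prod_of_mem _ hi
    · rw [Polynomial.notMem_support_iff.mp hi]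
      exact one_dvd _
  
lemma polyDenom_mem (f : Polynomial ℚ) :
    0 < polyDenom f ∧ IsIntPoly ((polyDenom f : ℚ) • f) :=
  Nat.sInf_mem (polyDenom_set_nonempty f)

lemma polyDenom_dvd (f : Polynomial ℚ) (d : ℕ) (hd : 0 < d)
    (h : IsIntPoly ((d : ℚ) • f)) : polyDenom f ∣ d := by
  obtain ⟨hpos, hint⟩ := polyDenom_mem f
  set g := Nat.gcd (polyDenom f) d with hg
  have hgmem : g ∈ {d : ℕ | 0 < d ∧ IsIntPoly ((d : ℚ) • f)} := by
    refine ⟨Nat.gcd_pos_of_pos_right _ hd, ?_⟩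
    rw [isIntPoly_iff _ _ (Nat.gcd_pos_of_pos_right _ hd)]
    intro i
    exact Nat.dvd_gcd ((isIntPoly_iff f _ hpos).mp hint i) ((isIntPoly_iff f _ hd).mp h i)
  have h1 : polyDenom f ≤ g := Nat.sInf_le hgmem
  have h2 : g ∣ polyDenom f := Nat.gcd_dvd_left _ _
  have h3 : g = polyDenom f := le_antisymm (Nat.le_of_dvd hpos h2) h1
  rw [← h3]
  exact Nat.gcd_dvd_right _ _

lemma coeff_top (n : ℕ) :
    (Polynomial.bernoulli (n+1) - Polynomial.C (bernoulli (n+1))).coeff (n+1) = 1 := by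
  rw [Polynomial.coeff_sub, Polynomial.bernoulli_def, Polynomial.finset_sum_coeff]
  simp [Polynomial.coeff_monomial, Polynomial.coeff_C]

/-- For `n ≥ 0`, `denom (S_n(x)) = (n+1) · D_{n+1}`. -/
theorem stmt_1 (n : ℕ) :
    polyDenom (Spoly n) = (n + 1) * D (n + 1) := by
  set f := Polynomial.bernoulli (n+1) - Polynomial.C (bernoulli (n+1)) with hf
  set m : ℕ := n + 1 with hm'
  have hm : 0 < m := Nat.succ_pos n
  have hmQ : ((m:ℚ)) ≠ 0 := by positivity
  have hcoeff : ∀ i, (Spoly n).coeff i = (m:ℚ)⁻¹ * f.coeff i := by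
    intro i
    rw [Spoly, Polynomial.coeff_C_mul]
    norm_num [hm', hf]
  obtain ⟨hDpos, hDint⟩ := polyDenom_mem f
  obtain ⟨hEpos, hEint⟩ := polyDenom_mem (Spoly n)
  set Dv := polyDenom f with hDv
  set E := polyDenom (Spoly n) with hE
  have hD_eq : D (n+1) = Dv := rfl
  have h1 : E ∣ m * Dv := by
    apply polyDenom_dvd _ _ (Nat.mul_pos hm hDpos)
    intro i
    rw [Polynomial.coeff_smul, smul_eq_mul, hcoeff i]
    have heq : ((m*Dv : ℕ):ℚ) * ((m:ℚ)⁻¹ * f.coeff i) = (Dv:ℚ) * f.coeff i := by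
      push_cast
      field_simp
    rw [heq]
    have := hDint i
    rwa [Polynomial.coeff_smul, smul_eq_mul] at this
  have htop : (Spoly n).coeff (n+1) = (m:ℚ)⁻¹ := by
    rw [hcoeff, hf, coeff_top, mul_one]
  have hmE : m ∣ E := by
    have h := hEint (n+1)
    rw [Polynomial.coeff_smul, smul_eq_mul, htop] at h
    have := (den_mul_eq_one_iff _ E hEpos).mp h
    rwa [Rat.inv_natCast_den_of_pos hm] at this
  obtain ⟨E', hE'⟩ := hmE
  have hE'pos : 0 < E' := by
    rcases Nat.eq_zero_or_pos E' with h | h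
    · exfalso; rw [h, mul_zero] at hE'; exact absurd hE' (Nat.pos_iff_ne_zero.mp hEpos)
    · exact h
  have h2 : Dv ∣ E' := by
    apply polyDenom_dvd _ _ hE'pos
    intro i
    have h := hEint i
    rw [Polynomial.coeff_smul, smul_eq_mul, hcoeff i, hE'] at h
    have heq : ((m*E' : ℕ):ℚ) * ((m:ℚ)⁻¹ * f.coeff i) = (E':ℚ) * f.coeff i := by
      push_cast
      field_simp
    rw [heq] at h
    rwa [Polynomial.coeff_smul, smul_eq_mul]
  have h3 : m * Dv ∣ E := hE' ▸ Nat.mul_dvd_mul_left m h2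
  rw [hD_eq]
  exact Nat.dvd_antisymm h1 h3
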